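/- Let $G$ be a row-finite directed graph with no sinks, let $L \subseteq G^0$ be the set of vertices that can reach a loop (i.e., $v \in L$ iff there is a loop $x$ with $v \geq s(x_1)$), and let $M = G^0 \setminus L$. Then $M$ is either empty or infinite. -/

import Mathlib

/-- `l` is a path: consecutive edges are composable. -/
def IsPathList {V E : Type*} (r s : E → V) (l : List E) : Prop :=
  l.Chain' (fun a b => r a = s b)

/-- `v ≥ w`: there is a (possibly empty) path from `v` to `w`. -/
def Reach {V E : Type*} (r s : E → V) : V → V → Prop :=
  Relation.ReflTransGen (fun a b => ∃ e, s e = a ∧ r e = b)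

/-- let `L` be the set of vertices that can reach a loop and
`M = G⁰ \ L`.  For a countable row-finite graph with no sinks, `M` is either
empty or infinite. -/
theorem nonloop_set_empty_or_infinite
    {V E : Type*} [Countable V] [Countable E] (r s : E → V)
    (hrow : ∀ v : V, {e : E | s e = v}.Finite)
    (hnosink : ∀ v : V, ∃ e : E, s e = v) :
    ∀ L M : Set V,
      L = {v : V | ∃ l : List E, ∃ h : l ≠ [], IsPathList r s l ∧
            s (l.head h) = r (l.getLast h) ∧ Reach r s v (s (l.head h))} →
      M = Lᶜ →
      M = ∅ ∨ M.Infinite := by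
  intro L M hL hM
  by_contra hcon
  push_neg at hcon
  obtain ⟨hne, hfin⟩ := hcon
  choose f hf using hnosink
  set g : V → V := fun v => r (f v) with hg
  have hclos : ∀ v ∈ M, g v ∈ M := by
    intro v hv
    by_contra hgv
    have hgL : g v ∈ L := by
      rw [hM] at hgv; simpa using hgv
    rw [hL] at hgL
    obtain ⟨l, hl, hpath, hloop, hreach⟩ := hgL
    have : v ∈ L := by
      rw [hL]
      exact ⟨l, hl, hpath, hloop,
        Relation.ReflTransGen.head ⟨f v, hf v, rfl⟩ hreach⟩
    rw [hM] at hv; exact hv this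
  obtain ⟨u0, hu0⟩ := hne
  have hiter : ∀ n, g^[n] u0 ∈ M := by
    intro n
    induction n with
    | zero => simpa
    | succ n ih => rw [Function.iterate_succ_apply']; exact hclos _ ih
  obtain ⟨i, j, hij, heq⟩ := hfin.exists_lt_map_eq_of_forall_mem hiter
  set u := g^[i] u0 with hu
  set n := j - i with hnd
  have hn1 : 1 ≤ n := by omega
  clear_value n
  have hcyc : g^[n] u = u := by
    have h1 : g^[n] (g^[i] u0) = g^[j] u0 := by
      rw [← Function.iterate_add_apply]; congr 1; omega
    rw [hu, h1, ← heq]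
  have huM : u ∈ M := hiter i
  have hstep : ∀ k, g^[k + 1] u = g (g^[k] u) := fun k =>
    Function.iterate_succ_apply' g k u
  set l : List E := (List.range n).map (fun k => f (g^[k] u)) with hldef
  have hlne : l ≠ [] := by
    simp [hldef]
    omega
  have hlen : l.length = n := by simp [hldef]
  have hget : ∀ (k : ℕ) (hk : k < l.length), l[k] = f (g^[k] u) := by
    intro k hk
    simp [hldef]
  have hhead : l.head hlne = f u := by
    rw [List.head_eq_getElem]
    have := hget 0 (by omega)
    simpa using this
  have hlast : l.getLast hlne = f (g^[n - 1] u) := by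
    rw [List.getLast_eq_getElem]
    rw [hget (l.length - 1) (by omega)]
    rw [hlen]
  have : u ∈ L := by
    rw [hL]
    refine ⟨l, hlne, ?_, ?_, ?_⟩
    · -- path condition
      obtain ⟨m, rfl⟩ := Nat.exists_eq_succ_of_ne_zero (by omega : n ≠ 0)
      unfold IsPathList List.Chain'
      rw [hldef, List.isChain_map, List.isChain_range_succ]
      intro k hk
      show r (f (g^[k] u)) = s (f (g^[k + 1] u))
      rw [hf, hstep k]
    · rw [hhead, hlast, hf]
      show u = r (f (g^[n-1] u))
      have h2 : r (f (g^[n-1] u)) = g^[n] u := by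
        show g (g^[n-1] u) = g^[n] u
        rw [← hstep]; congr 1; omega
      rw [h2, hcyc]
    · rw [hhead, hf]
      exact Relation.ReflTransGen.refl
  rw [hM] at huM
  exact huM this
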